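/- Let $k \geq 2$ be an integer and let $G$ be a finite simple graph of order $n \geq \frac{2k+3+\sqrt{8k^2-8k+1}}{2}$ with $2e(G) \leq kn - 2$. Then $q(G) < 2(n-2) + \frac{2k-2}{n-1}$, where $q(G)$ is the signless Laplacian spectral radius of $G$. -/

import Mathlib

open SimpleGraph Finset

/-- The number of edges of a simple graph. -/
noncomputable def eCard {V : Type*} (G : SimpleGraph V) : ℕ := Nat.card G.edgeSet

/-- The number of connected components of `G - S`, the subgraph of `G` induced on the
complement of `S`. -/
noncomputable def numCompDel {V : Type*} (G : SimpleGraph V) (S : Set V) : ℕ :=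
  Nat.card (G.induce Sᶜ).ConnectedComponent

/-- `G` has the `k`-strong parity property: for every vertex subset `X` of even size, `G`
contains a spanning subgraph `F` whose degrees are odd on `X` and even and at least `k`
outside `X`. -/
def KStrongParity {V : Type*} [Fintype V] (k : ℕ) (G : SimpleGraph V) : Prop :=
  ∀ X : Finset V, Even X.card → ∃ F : SimpleGraph V, F ≤ G ∧
    (∀ u ∈ X, Odd (Nat.card (F.neighborSet u))) ∧
    (∀ v, v ∉ X → Even (Nat.card (F.neighborSet v)) ∧ k ≤ Nat.card (F.neighborSet v))

/-- The join `K_s ∨ (K_{n 0} ∪ K_{n 1} ∪ ⋯ ∪ K_{n (t-1)})` of a complete graph `K_s` with a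
disjoint union of complete graphs of sizes `n 0, …, n (t-1)`. -/
def GJoin (s : ℕ) {t : ℕ} (n : Fin t → ℕ) :
    SimpleGraph (Fin s ⊕ Σ i : Fin t, Fin (n i)) where
  Adj u v := u ≠ v ∧ (u.isLeft ∨ v.isLeft ∨
    ∃ i : Fin t, (∃ a, u = Sum.inr ⟨i, a⟩) ∧ (∃ b, v = Sum.inr ⟨i, b⟩))
  symm := by
    constructor
    rintro u v ⟨h1, h2⟩
    refine ⟨h1.symm, ?_⟩
    rcases h2 with h | h | ⟨i, ha, hb⟩
    · exact Or.inr (Or.inl h)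
    · exact Or.inl h
    · exact Or.inr (Or.inr ⟨i, hb, ha⟩)
  loopless := by constructor; rintro u ⟨h, -⟩; exact h rfl

/-- The graph `K_s ∨ (K_a ∪ m K_p)`. -/
def KJmix (s a m p : ℕ) :
    SimpleGraph (Fin s ⊕ Σ i : Fin (m + 1), Fin ((Fin.cons a (fun _ => p) : Fin (m+1) → ℕ) i)) :=
  GJoin s (Fin.cons a (fun _ => p) : Fin (m+1) → ℕ)

/-- The signless Laplacian spectral radius of `G`: the largest eigenvalue of
`Q(G) = D(G) + A(G)`. -/
noncomputable def qSpec {V : Type*} [Fintype V] [DecidableEq V] (G : SimpleGraph V)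
    [DecidableRel G.Adj] : ℝ :=
  sSup {x : ℝ | Module.End.HasEigenvalue
    (Matrix.toLin' (Matrix.diagonal (fun v => (G.degree v : ℝ)) + G.adjMatrix ℝ)) x}

/-- If `k ≥ 2`, `G` has order `n ≥ (2k + 3 + √(8k² - 8k + 1))/2` and `2e(G) ≤ kn - 2`,
then `q(G) < 2(n - 2) + (2k - 2)/(n - 1)`. -/
lemma numeric (k n d Sd : ℝ) (hk : 2 ≤ k) (hd0 : 0 ≤ d) (hdn : d ≤ n - 1)
    (hS1 : Sd ≤ d * (n - 1)) (hS2 : Sd + d ≤ k * n - 2)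
    (hC : 0 ≤ n ^ 2 - (2 * k + 3) * n - k ^ 2 + 5 * k + 2) (hnk : 2 * k + 3 ≤ 2 * n)
    (hcase : d ≤ k ∨ k ≤ d) :
    (Sd + d) * (n - 1) < ((2 * (n - 2) - d) * (n - 1) + 2 * k - 2) * (d + 1) := by
  rcases hcase with h | h
  · nlinarith [mul_nonneg hd0 (sub_nonneg.2 h), mul_nonneg hd0 hd0, sq_nonneg (n - 1 - d),
      mul_nonneg (sub_nonneg.2 h) (sub_nonneg.2 hdn), mul_nonneg hd0 (sub_nonneg.2 hdn)]
  · nlinarith [mul_nonneg (sub_nonneg.2 h) (sub_nonneg.2 hdn), mul_nonneg hd0 hd0,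
      mul_nonneg hd0 (sub_nonneg.2 hdn), sq_nonneg (n - 1 - d)]

theorem qSpec_lt_of_few_edges (k : ℕ) (hk : 2 ≤ k)
    {V : Type*} [Fintype V] [DecidableEq V] (G : SimpleGraph V) [DecidableRel G.Adj]
    (n : ℕ) (hn : Fintype.card V = n)
    (hn2 : (2 * (k : ℝ) + 3 + Real.sqrt (8 * (k : ℝ) ^ 2 - 8 * k + 1)) / 2 ≤ (n : ℝ))
    (he : 2 * (eCard G : ℤ) ≤ k * n - 2) :
    qSpec G < 2 * ((n : ℝ) - 2) + (2 * (k : ℝ) - 2) / ((n : ℝ) - 1) := by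
  set B : ℝ := 2 * ((n : ℝ) - 2) + (2 * (k : ℝ) - 2) / ((n : ℝ) - 1) with hB
  have hk2 : (2 : ℝ) ≤ (k : ℝ) := by exact_mod_cast hk
  have hsq0 : (0 : ℝ) ≤ 8 * (k : ℝ) ^ 2 - 8 * k + 1 := by nlinarith
  have hs : Real.sqrt (8 * (k : ℝ) ^ 2 - 8 * k + 1) ^ 2 = 8 * (k : ℝ) ^ 2 - 8 * k + 1 :=
    Real.sq_sqrt hsq0
  have hs0 : 0 ≤ Real.sqrt (8 * (k : ℝ) ^ 2 - 8 * k + 1) := Real.sqrt_nonneg _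
  have hnk : 2 * (k : ℝ) + 3 ≤ 2 * (n : ℝ) := by nlinarith
  have hC : 0 ≤ (n : ℝ) ^ 2 - (2 * k + 3) * n - (k : ℝ) ^ 2 + 5 * k + 2 := by
    nlinarith [mul_nonneg (by nlinarith : (0:ℝ) ≤ 2 * (n:ℝ) - (2 * k + 3)
        - Real.sqrt (8 * (k : ℝ) ^ 2 - 8 * k + 1))
      (by nlinarith : (0:ℝ) ≤ 2 * (n:ℝ) - (2 * k + 3)
        + Real.sqrt (8 * (k : ℝ) ^ 2 - 8 * k + 1))]
  have hn1 : (1 : ℝ) < (n : ℝ) - 1 := by nlinarith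
  have hn1' : (0 : ℝ) < (n : ℝ) - 1 := by linarith
  have hBpos : 0 < B := by
    rw [hB]
    have : 0 < (2 * (k : ℝ) - 2) / ((n : ℝ) - 1) := div_pos (by linarith) hn1'
    nlinarith
  -- V is nonempty
  have hVne : (Finset.univ : Finset V).Nonempty := by
    rw [← Finset.card_pos, Finset.card_univ, hn]
    have : (0 : ℝ) < (n : ℝ) := by linarith
    exact_mod_cast this
  -- edge count
  have hsum : ∑ v, G.degree v = 2 * G.edgeFinset.card := G.sum_degrees_eq_twice_card_edges
  have hecard : (eCard G : ℝ) = (G.edgeFinset.card : ℝ) := by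
    have h : Nat.card G.edgeSet = G.edgeFinset.card := by
      rw [Nat.card_eq_fintype_card]
      exact (Set.toFinset_card _).symm
    unfold eCard
    exact_mod_cast congrArg (Nat.cast : ℕ → ℝ) h
  have hm : 2 * (eCard G : ℝ) ≤ (k : ℝ) * n - 2 := by exact_mod_cast he
  -- the per-vertex bound function
  set g : V → ℝ := fun u => (G.degree u : ℝ) +
    (∑ v ∈ G.neighborFinset u, ((G.degree v : ℝ) + 1)) / ((G.degree u : ℝ) + 1) with hg
  -- each g u < B
  have hgB : ∀ u, g u < B := by
    intro u
    set d : ℝ := (G.degree u : ℝ) with hd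
    set Sd : ℝ := ∑ v ∈ G.neighborFinset u, (G.degree v : ℝ) with hSd
    have hdeg1 : (0 : ℝ) < d + 1 := by positivity
    have hcS : ∑ v ∈ G.neighborFinset u, ((G.degree v : ℝ) + 1) = Sd + d := by
      rw [Finset.sum_add_distrib, hSd, Finset.sum_const, nsmul_eq_mul, mul_one,
        G.card_neighborFinset_eq_degree, hd]
    have hd0 : (0 : ℝ) ≤ d := by positivity
    have hdn : d ≤ (n : ℝ) - 1 := by
      have h1 : G.degree u + 1 ≤ n := by
        have := G.degree_lt_card_verts u
        omega
      have h2 : (G.degree u : ℝ) + 1 ≤ (n : ℝ) := by exact_mod_cast h1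
      rw [hd]; linarith
    have hS1 : Sd ≤ d * ((n : ℝ) - 1) := by
      rw [hSd, hd, ← G.card_neighborFinset_eq_degree, ← nsmul_eq_mul, ← Finset.sum_const]
      refine Finset.sum_le_sum fun v _ => ?_
      have h1 : G.degree v + 1 ≤ n := by
        have := G.degree_lt_card_verts v
        omega
      have h2 : (G.degree v : ℝ) + 1 ≤ (n : ℝ) := by exact_mod_cast h1
      linarith
    have hS2 : Sd + d ≤ (k : ℝ) * n - 2 := by
      have hsub : insert u (G.neighborFinset u) ⊆ Finset.univ := Finset.subset_univ _
      have hnm : u ∉ G.neighborFinset u := by simp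
      have h1 : ∑ v ∈ insert u (G.neighborFinset u), (G.degree v : ℝ) ≤
          ∑ v, (G.degree v : ℝ) :=
        Finset.sum_le_sum_of_subset_of_nonneg hsub (fun _ _ _ => by positivity)
      rw [Finset.sum_insert hnm] at h1
      have h2 : ∑ v, (G.degree v : ℝ) = 2 * (eCard G : ℝ) := by
        rw [hecard]
        exact_mod_cast hsum
      rw [h2] at h1
      rw [hSd, hd]
      calc Sd + d = d + Sd := by ring
        _ ≤ 2 * (eCard G : ℝ) := h1
        _ ≤ (k : ℝ) * n - 2 := hm
    have hcase : d ≤ (k : ℝ) ∨ (k : ℝ) ≤ d := le_total d k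
    have key := numeric (k : ℝ) (n : ℝ) d Sd hk2 hd0 hdn hS1 hS2 hC hnk hcase
    have hdiv : (Sd + d) / (d + 1) < B - d := by
      have hBd : B - d = ((2 * ((n : ℝ) - 2) - d) * ((n : ℝ) - 1) + 2 * (k : ℝ) - 2)
          / ((n : ℝ) - 1) := by
        rw [hB]
        field_simp
        ring
      rw [hBd, div_lt_div_iff₀ hdeg1 hn1']
      linarith [key]
    rw [hg]
    simp only
    rw [hcS]
    linarith [hdiv]
  -- Gershgorin: every eigenvalue is ≤ some g u
  have hbound : ∀ μ : ℝ, Module.End.HasEigenvalue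
      (Matrix.toLin' (Matrix.diagonal (fun v => (G.degree v : ℝ)) + G.adjMatrix ℝ)) μ →
      ∃ u : V, μ ≤ g u := by
    intro μ hμ
    obtain ⟨x, hx⟩ := hμ.exists_hasEigenvector
    have hxe : ∀ w, (Matrix.diagonal (fun v => (G.degree v : ℝ)) + G.adjMatrix ℝ).mulVec x w
        = μ * x w := by
      intro w
      have := hx.apply_eq_smul
      rw [Matrix.toLin'_apply] at this
      exact congrFun this w ▸ rfl
    set c : V → ℝ := fun v => (G.degree v : ℝ) + 1 with hc
    have hcpos : ∀ v, 0 < c v := fun v => by positivity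
    obtain ⟨u, -, hu⟩ := Finset.exists_max_image Finset.univ (fun v => |x v| / c v) hVne
    have hupos : 0 < |x u| / c u := by
      obtain ⟨w, hw⟩ := Function.ne_iff.mp hx.right
      have hw' : 0 < |x w| / c w := div_pos (abs_pos.2 hw) (hcpos w)
      exact lt_of_lt_of_le hw' (hu w (Finset.mem_univ w))
    refine ⟨u, ?_⟩
    have hcu : 0 < c u := hcpos u
    -- row equation
    have hrow : μ * x u = (G.degree u : ℝ) * x u + ∑ v ∈ G.neighborFinset u, x v := by
      have h := hxe u
      rw [Matrix.add_mulVec, Pi.add_apply, Matrix.mulVec_diagonal,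
        G.adjMatrix_mulVec_apply] at h
      linarith [h]
    have h1 : (μ - (G.degree u : ℝ)) * x u = ∑ v ∈ G.neighborFinset u, x v := by
      linarith [hrow]
    have habs : |μ - (G.degree u : ℝ)| * ((|x u| / c u) * c u) ≤
        (|x u| / c u) * ∑ v ∈ G.neighborFinset u, c v := by
      calc |μ - (G.degree u : ℝ)| * ((|x u| / c u) * c u)
          = |μ - (G.degree u : ℝ)| * |x u| := by
            rw [div_mul_cancel₀ _ (ne_of_gt hcu)]
        _ = |(μ - (G.degree u : ℝ)) * x u| := (abs_mul _ _).symm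
        _ = |∑ v ∈ G.neighborFinset u, x v| := by rw [h1]
        _ ≤ ∑ v ∈ G.neighborFinset u, |x v| := Finset.abs_sum_le_sum_abs _ _
        _ ≤ ∑ v ∈ G.neighborFinset u, (|x u| / c u) * c v := by
            refine Finset.sum_le_sum fun v _ => ?_
            have hv := hu v (Finset.mem_univ v)
            have hxv : |x v| = (|x v| / c v) * c v :=
              (div_mul_cancel₀ _ (ne_of_gt (hcpos v))).symm
            rw [hxv]
            exact mul_le_mul_of_nonneg_right hv (le_of_lt (hcpos v))
        _ = (|x u| / c u) * ∑ v ∈ G.neighborFinset u, c v := (Finset.mul_sum _ _ _).symm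
    have habs' : (|x u| / c u) * (|μ - (G.degree u : ℝ)| * c u) ≤
        (|x u| / c u) * ∑ v ∈ G.neighborFinset u, c v := by
      calc (|x u| / c u) * (|μ - (G.degree u : ℝ)| * c u)
          = |μ - (G.degree u : ℝ)| * ((|x u| / c u) * c u) := by ring
        _ ≤ _ := habs
    have h2 : |μ - (G.degree u : ℝ)| * c u ≤ ∑ v ∈ G.neighborFinset u, c v :=
      le_of_mul_le_mul_left habs' hupos
    have h3 : μ - (G.degree u : ℝ) ≤ (∑ v ∈ G.neighborFinset u, c v) / c u := by
      rw [le_div_iff₀ hcu]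
      calc (μ - (G.degree u : ℝ)) * c u ≤ |μ - (G.degree u : ℝ)| * c u :=
            mul_le_mul_of_nonneg_right (le_abs_self _) hcu.le
        _ ≤ _ := h2
    show μ ≤ (G.degree u : ℝ) + (∑ v ∈ G.neighborFinset u, c v) / c u
    linarith [h3]
  -- conclude
  have hsup : qSpec G ≤ Finset.univ.sup' hVne g ⊔ 0 := by
    unfold qSpec
    refine Real.sSup_le ?_ (le_max_right _ _)
    intro μ hμ
    obtain ⟨u, hu⟩ := hbound μ hμ
    exact le_trans hu (le_trans (Finset.le_sup' g (Finset.mem_univ u)) (le_max_left _ _))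
  refine lt_of_le_of_lt hsup ?_
  rw [sup_lt_iff]
  exact ⟨(Finset.sup'_lt_iff hVne).2 fun u _ => hgB u, hBpos⟩
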